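/- Reduction to randomized response (nonadaptive case): if μ and ν are probability measures on Y such that μ(G) ≤ e^ε ν(G) + δ and ν(G) ≤ e^ε μ(G) + δ for all measurable G, then there exists a Markov kernel κ from the 4-point space {0,1,⊤,⊥} to Y such that μ = κ∗(law of R(0)) and ν = κ∗(law of R(1)), where R is (ε, δ)-randomized response. -/

import Mathlib

open MeasureTheory ProbabilityTheory Real

/-- The four possible outputs of randomized response. -/
inductive RROut : Type
  | zero
  | one
  | top
  | bot
  deriving DecidableEq

instance : MeasurableSpace RROut := ⊤

/-- The law of `(ε, δ)`-randomized response on input bit `b`. -/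
noncomputable def rrLaw (ε δ : ℝ) (b : Bool) : Measure RROut :=
  ENNReal.ofReal ((1 - δ) * Real.exp ε / (1 + Real.exp ε)) •
      Measure.dirac (if b then RROut.one else RROut.zero)
    + ENNReal.ofReal ((1 - δ) / (1 + Real.exp ε)) •
      Measure.dirac (if b then RROut.zero else RROut.one)
    + ENNReal.ofReal δ • Measure.dirac (if b then RROut.top else RROut.bot)


open scoped ENNReal NNReal

lemma ennreal_solve {p q x y : ℝ≥0∞} (hp : p ≠ ⊤) (hq : q ≠ ⊤) (hx : x ≠ ⊤)
    (hr0 : p*p - q*q ≠ 0) (h1 : q*y ≤ p*x) (h2 : q*x ≤ p*y) :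
    p * ((p*p - q*q)⁻¹ * (p*x - q*y)) + q * ((p*p - q*q)⁻¹ * (p*y - q*x)) = x := by
  have hrT : p*p - q*q ≠ ⊤ := ne_top_of_le_ne_top (ENNReal.mul_ne_top hp hp) tsub_le_self
  have e1 : p * (p*x - q*y) = p*p*x - p*(q*y) := by
    rw [ENNReal.mul_sub (fun _ _ => hp), mul_assoc]
  have e2 : q * (p*y - q*x) = p*(q*y) - q*q*x := by
    rw [ENNReal.mul_sub (fun _ _ => hq)]
    congr 1 <;> ring
  have hle1 : p*(q*y) ≤ p*p*x := by
    rw [mul_assoc]; exact mul_le_mul_right h1 p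
  have hle2 : q*q*x ≤ p*(q*y) := by
    calc q*q*x = q*(q*x) := by ring
    _ ≤ q*(p*y) := mul_le_mul_right h2 q
    _ = p*(q*y) := by ring
  calc p * ((p*p - q*q)⁻¹ * (p*x - q*y)) + q * ((p*p - q*q)⁻¹ * (p*y - q*x))
      = (p*p - q*q)⁻¹ * (p * (p*x - q*y) + q * (p*y - q*x)) := by
        rw [mul_left_comm p, mul_left_comm q, ← mul_add]
    _ = (p*p - q*q)⁻¹ * ((p*p*x - p*(q*y)) + (p*(q*y) - q*q*x)) := by rw [e1, e2]
    _ = (p*p - q*q)⁻¹ * (p*p*x - q*q*x) := by rw [tsub_add_tsub_cancel hle1 hle2]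
    _ = (p*p - q*q)⁻¹ * ((p*p - q*q) * x) := by
        congr 1; exact (ENNReal.sub_mul (fun _ _ => hx)).symm
    _ = x := by rw [← mul_assoc, ENNReal.inv_mul_cancel hr0 hrT, one_mul]

lemma core_m {Y : Type*} [MeasurableSpace Y] (σ : Measure Y)
    (c δ' : ℝ≥0∞) (hc1 : 1 ≤ c) (hcT : c ≠ ⊤) (hδ1 : δ' < 1)
    (f g : Y → ℝ≥0∞) (hf : Measurable f) (hg : Measurable g)
    (hf1 : ∫⁻ y, f y ∂σ = 1) (hg1 : ∫⁻ y, g y ∂σ = 1)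
    (hA : ∫⁻ y, (f y - c * g y) ∂σ ≤ δ') (hB : ∫⁻ y, (g y - c * f y) ∂σ ≤ δ')
    (hBA : ∫⁻ y, (g y - c * f y) ∂σ ≤ ∫⁻ y, (f y - c * g y) ∂σ) :
    ∃ m0 m1 : Y → ℝ≥0∞, Measurable m0 ∧ Measurable m1 ∧
      (∀ y, m0 y ≤ f y) ∧ (∀ y, m1 y ≤ g y) ∧
      (∀ y, m1 y ≤ c * m0 y) ∧ (∀ y, m0 y ≤ c * m1 y) ∧
      ∫⁻ y, m0 y ∂σ = 1 - δ' ∧ ∫⁻ y, m1 y ∂σ = 1 - δ' := by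
  have hc0 : c ≠ 0 := fun h => by simp [h] at hc1
  set A := ∫⁻ y, (f y - c * g y) ∂σ with hA_def
  set B := ∫⁻ y, (g y - c * f y) ∂σ with hB_def
  have hA1 : A < 1 := lt_of_le_of_lt hA hδ1
  have hAT : A ≠ ⊤ := hA1.ne_top
  have hB1 : B < 1 := lt_of_le_of_lt hB hδ1
  set u := fun y => min (f y) (c * g y) with hu_def
  set v := fun y => min (g y) (c * f y) with hv_def
  have humeas : Measurable u := hf.min (hg.const_mul c)
  have hvmeas : Measurable v := hg.min (hf.const_mul c)
  -- ∫ u = 1 - A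
  have huf : ∀ y, u y + (f y - c * g y) = f y := by
    intro y
    rcases le_total (f y) (c * g y) with h | h
    · rw [hu_def]; simp only [min_eq_left h, tsub_eq_zero_of_le h, add_zero]
    · rw [hu_def]; simp only [min_eq_right h, add_tsub_cancel_of_le h]
  have hu1 : ∫⁻ y, u y ∂σ + A = 1 := by
    rw [hA_def, ← lintegral_add_left humeas]
    rw [lintegral_congr huf, hf1]
  have huint : ∫⁻ y, u y ∂σ = 1 - A := ENNReal.eq_sub_of_add_eq hAT hu1
  have hvg : ∀ y, v y + (g y - c * f y) = g y := by
    intro y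
    rcases le_total (g y) (c * f y) with h | h
    · rw [hv_def]; simp only [min_eq_left h, tsub_eq_zero_of_le h, add_zero]
    · rw [hv_def]; simp only [min_eq_right h, add_tsub_cancel_of_le h]
  have hv1 : ∫⁻ y, v y ∂σ + B = 1 := by
    rw [hB_def, ← lintegral_add_left hvmeas]
    rw [lintegral_congr hvg, hg1]
  have hvint : ∫⁻ y, v y ∂σ = 1 - B := ENNReal.eq_sub_of_add_eq hB1.ne_top hv1
  -- key pointwise inequalities
  have hvcu : ∀ y, v y ≤ c * u y := by
    intro y
    rcases le_total (f y) (c * g y) with h | h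
    · rw [hu_def]; simp only [min_eq_left h]
      exact le_trans (min_le_right _ _) le_rfl
    · rw [hu_def]; simp only [min_eq_right h]
      calc v y ≤ g y := min_le_left _ _
        _ = 1 * g y := (one_mul _).symm
        _ ≤ (c * c) * g y := mul_le_mul_left (one_le_mul hc1 hc1) _
        _ = c * (c * g y) := by ring
  have hucv : ∀ y, u y ≤ c * v y := by
    intro y
    rcases le_total (g y) (c * f y) with h | h
    · rw [hv_def]; simp only [min_eq_left h]
      exact le_trans (min_le_right _ _) le_rfl
    · rw [hv_def]; simp only [min_eq_right h]
      calc u y ≤ f y := min_le_left _ _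
        _ = 1 * f y := (one_mul _).symm
        _ ≤ (c * c) * f y := mul_le_mul_left (one_le_mul hc1 hc1) _
        _ = c * (c * f y) := by ring
  -- the scaling factor
  have h1A0 : (1:ℝ≥0∞) - A ≠ 0 := (tsub_pos_of_lt hA1).ne'
  have h1AT : (1:ℝ≥0∞) - A ≠ ⊤ := ne_top_of_le_ne_top ENNReal.one_ne_top tsub_le_self
  set l := (1 - δ') / (1 - A) with hl_def
  have hl1 : l ≤ 1 := by
    rw [hl_def]
    calc (1 - δ') / (1 - A) ≤ (1 - A) / (1 - A) :=
          ENNReal.div_le_div_right (tsub_le_tsub_left hA 1) _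
      _ = 1 := ENNReal.div_self h1A0 h1AT
  set m0 := fun y => l * u y with hm0_def
  have hm0meas : Measurable m0 := humeas.const_mul l
  have hm0int : ∫⁻ y, m0 y ∂σ = 1 - δ' := by
    rw [hm0_def, lintegral_const_mul l humeas, huint, hl_def,
      ENNReal.div_mul_cancel h1A0 h1AT]
  have hm0f : ∀ y, m0 y ≤ f y :=
    fun y => le_trans (mul_le_of_le_one_left' hl1) (min_le_left _ _)
  -- second measure
  set w := fun y => min (g y) (c * m0 y) with hw_def
  have hwmeas : Measurable w := hg.min (hm0meas.const_mul c)
  have hwg : ∀ y, w y ≤ g y := fun y => min_le_left _ _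
  have hwlv : ∀ y, l * v y ≤ w y := by
    intro y
    refine le_min ?_ ?_
    · exact le_trans (mul_le_of_le_one_left' hl1) (min_le_left _ _)
    · calc l * v y ≤ l * (c * u y) := mul_le_mul_right (hvcu y) l
        _ = c * m0 y := by rw [hm0_def]; ring
  set U := ∫⁻ y, w y ∂σ with hU_def
  have hU1 : 1 - δ' ≤ U := by
    calc 1 - δ' = l * (1 - A) := (ENNReal.div_mul_cancel h1A0 h1AT).symm
      _ ≤ l * (1 - B) := mul_le_mul_right (tsub_le_tsub_left hBA 1) l
      _ = ∫⁻ y, l * v y ∂σ := by rw [lintegral_const_mul l hvmeas, hvint]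
      _ ≤ U := lintegral_mono hwlv
  have hUT : U ≠ ⊤ := by
    refine ne_top_of_le_ne_top ENNReal.one_ne_top ?_
    rw [← hg1]; exact lintegral_mono hwg
  set L := c⁻¹ * (1 - δ') with hL_def
  have hLle : L ≤ 1 - δ' := by
    rw [hL_def]
    calc c⁻¹ * (1 - δ') ≤ 1 * (1 - δ') :=
          mul_le_mul_left (ENNReal.inv_le_one.mpr hc1) _
      _ = 1 - δ' := one_mul _
  have hLU : L ≤ U := hLle.trans hU1
  set t := ((1 - δ') - L) / (U - L) with ht_def
  have ht1 : t ≤ 1 := ENNReal.div_le_of_le_mul (by rw [one_mul]; exact tsub_le_tsub_right hU1 L)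
  set m1 := fun y => (1 - t) * (c⁻¹ * m0 y) + t * w y with hm1_def
  have hm1meas : Measurable m1 :=
    ((hm0meas.const_mul c⁻¹).const_mul (1-t)).add (hwmeas.const_mul t)
  -- pointwise bounds for m1
  have hlow : ∀ y, c⁻¹ * m0 y ≤ w y := by
    intro y
    refine le_min ?_ ?_
    · calc c⁻¹ * m0 y ≤ c⁻¹ * (c * g y) :=
            mul_le_mul_right (le_trans (mul_le_of_le_one_left' hl1) (min_le_right _ _)) _
      _ = g y := by rw [← mul_assoc, ENNReal.inv_mul_cancel hc0 hcT, one_mul]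
    · calc c⁻¹ * m0 y ≤ 1 * m0 y := mul_le_mul_left (ENNReal.inv_le_one.mpr hc1) _
        _ = m0 y := one_mul _
        _ ≤ c * m0 y := le_mul_of_one_le_left' hc1
  have hm1w : ∀ y, m1 y ≤ w y := by
    intro y
    calc m1 y ≤ (1 - t) * w y + t * w y :=
          add_le_add (mul_le_mul_right (hlow y) _) le_rfl
      _ = ((1 - t) + t) * w y := (add_mul _ _ _).symm
      _ = 1 * w y := by rw [tsub_add_cancel_of_le ht1]
      _ = w y := one_mul _
  have hm1g : ∀ y, m1 y ≤ g y := fun y => (hm1w y).trans (hwg y)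
  have hm1cm0 : ∀ y, m1 y ≤ c * m0 y := fun y => (hm1w y).trans (min_le_right _ _)
  have hm0cm1 : ∀ y, m0 y ≤ c * m1 y := by
    intro y
    have hlb : c⁻¹ * m0 y ≤ m1 y := by
      calc c⁻¹ * m0 y = ((1 - t) + t) * (c⁻¹ * m0 y) := by
            rw [tsub_add_cancel_of_le ht1, one_mul]
        _ = (1 - t) * (c⁻¹ * m0 y) + t * (c⁻¹ * m0 y) := add_mul _ _ _
        _ ≤ m1 y := add_le_add le_rfl (mul_le_mul_right (hlow y) t)
    calc m0 y = c * (c⁻¹ * m0 y) := by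
          rw [← mul_assoc, ENNReal.mul_inv_cancel hc0 hcT, one_mul]
      _ ≤ c * m1 y := mul_le_mul_right hlb c
  -- integral of m1
  have hkey : t * (U - L) = (1 - δ') - L := by
    by_cases hUL : U - L = 0
    · have hnum : (1 - δ') - L = 0 :=
        le_antisymm (le_trans (tsub_le_tsub_right hU1 L) hUL.le) zero_le
      rw [ht_def, hnum, hUL, ENNReal.zero_div, mul_zero]
    · rw [ht_def, ENNReal.div_mul_cancel hUL (ne_top_of_le_ne_top hUT tsub_le_self)]
  have hm1int : ∫⁻ y, m1 y ∂σ = 1 - δ' := by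
    have e1 : ∫⁻ y, m1 y ∂σ = (1 - t) * L + t * U := by
      rw [hm1_def, lintegral_add_left (((hm0meas.const_mul c⁻¹)).const_mul (1-t))]
      rw [lintegral_const_mul (1-t) (hm0meas.const_mul c⁻¹),
        lintegral_const_mul t hwmeas,
        lintegral_const_mul c⁻¹ hm0meas, hm0int, ← hU_def, hL_def]
    rw [e1]
    calc (1 - t) * L + t * U = (1 - t) * L + t * (L + (U - L)) := by
          rw [add_tsub_cancel_of_le hLU]
      _ = ((1 - t) + t) * L + t * (U - L) := by ring
      _ = 1 * L + ((1 - δ') - L) := by rw [tsub_add_cancel_of_le ht1, hkey]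
      _ = 1 - δ' := by rw [one_mul, add_comm, tsub_add_cancel_of_le hLle]
  exact ⟨m0, m1, hm0meas, hm1meas, hm0f, hm1g, hm1cm0, hm0cm1, hm0int, hm1int⟩

lemma exists_densities {Y : Type*} [MeasurableSpace Y] (σ : Measure Y)
    (c δ' p q : ℝ≥0∞) (hc1 : 1 ≤ c) (hcT : c ≠ ⊤) (hδ1 : δ' < 1)
    (hp : p = c * q) (hq0 : q ≠ 0) (hqT : q ≠ ⊤) (hpqδ : p + q + δ' = 1)
    (f g : Y → ℝ≥0∞) (hf : Measurable f) (hg : Measurable g)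
    (hffin : ∀ᵐ y ∂σ, f y ≠ ⊤) (hgfin : ∀ᵐ y ∂σ, g y ≠ ⊤)
    (hf1 : ∫⁻ y, f y ∂σ = 1) (hg1 : ∫⁻ y, g y ∂σ = 1)
    (hA : ∫⁻ y, (f y - c * g y) ∂σ ≤ δ') (hB : ∫⁻ y, (g y - c * f y) ∂σ ≤ δ')
    (hBA : ∫⁻ y, (g y - c * f y) ∂σ ≤ ∫⁻ y, (f y - c * g y) ∂σ) :
    ∃ k0 k1 kt kb : Y → ℝ≥0∞,
      Measurable k0 ∧ Measurable k1 ∧ Measurable kt ∧ Measurable kb ∧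
      ∫⁻ y, k0 y ∂σ = 1 ∧ ∫⁻ y, k1 y ∂σ = 1 ∧ ∫⁻ y, kt y ∂σ = 1 ∧ ∫⁻ y, kb y ∂σ = 1 ∧
      (∀ᵐ y ∂σ, p * k0 y + q * k1 y + δ' * kb y = f y) ∧
      (∀ᵐ y ∂σ, q * k0 y + p * k1 y + δ' * kt y = g y) := by
  have hδ'T : δ' ≠ ⊤ := hδ1.ne_top
  have hpT : p ≠ ⊤ := by
    refine ne_top_of_le_ne_top ENNReal.one_ne_top ?_
    rw [← hpqδ]; exact le_add_right (le_add_right le_rfl)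
  have hqp : q ≤ p := by rw [hp]; exact le_mul_of_one_le_left' hc1
  have hpq1 : p + q = 1 - δ' := ENNReal.eq_sub_of_add_eq hδ'T hpqδ
  have h1δ'0 : (1:ℝ≥0∞) - δ' ≠ 0 := (tsub_pos_of_lt hδ1).ne'
  have h1δ'T : (1:ℝ≥0∞) - δ' ≠ ⊤ := ne_top_of_le_ne_top ENNReal.one_ne_top tsub_le_self
  obtain ⟨m0, m1, hm0meas, hm1meas, hm0f, hm1g, hm1cm0, hm0cm1, hm0int, hm1int⟩ :=
    core_m σ c δ' hc1 hcT hδ1 f g hf hg hf1 hg1 hA hB hBA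
  have hm0fin : ∀ᵐ y ∂σ, m0 y ≠ ⊤ :=
    hffin.mono fun y hy => ne_top_of_le_ne_top hy (hm0f y)
  have hm1fin : ∀ᵐ y ∂σ, m1 y ≠ ⊤ :=
    hgfin.mono fun y hy => ne_top_of_le_ne_top hy (hm1g y)
  -- the bottom density
  have hbot : ∃ kb : Y → ℝ≥0∞, Measurable kb ∧ ∫⁻ y, kb y ∂σ = 1 ∧
      ∀ᵐ y ∂σ, m0 y + δ' * kb y = f y := by
    by_cases hδ0 : δ' = 0
    · refine ⟨f, hf, hf1, ?_⟩
      have hz : ∫⁻ y, (f y - m0 y) ∂σ = 0 := by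
        rw [lintegral_sub hm0meas (by rw [hm0int]; exact h1δ'T) (ae_of_all _ hm0f),
          hf1, hm0int, hδ0, tsub_zero, tsub_self]
      have := (lintegral_eq_zero_iff (hf.sub hm0meas)).1 hz
      filter_upwards [this] with y hy
      have hle : f y ≤ m0 y := tsub_eq_zero_iff_le.1 hy
      rw [hδ0, zero_mul, add_zero]
      exact le_antisymm (hm0f y) hle
    · refine ⟨fun y => δ'⁻¹ * (f y - m0 y), (hf.sub hm0meas).const_mul _, ?_, ?_⟩
      · rw [lintegral_const_mul _ (f := fun y => f y - m0 y) (hf.sub hm0meas),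
          lintegral_sub hm0meas (by rw [hm0int]; exact h1δ'T) (ae_of_all _ hm0f),
          hf1, hm0int, ENNReal.sub_sub_cancel ENNReal.one_ne_top hδ1.le,
          ENNReal.inv_mul_cancel hδ0 hδ'T]
      · refine ae_of_all _ fun y => ?_
        rw [← mul_assoc, ENNReal.mul_inv_cancel hδ0 hδ'T, one_mul,
          add_tsub_cancel_of_le (hm0f y)]
  have htop : ∃ kt : Y → ℝ≥0∞, Measurable kt ∧ ∫⁻ y, kt y ∂σ = 1 ∧
      ∀ᵐ y ∂σ, m1 y + δ' * kt y = g y := by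
    by_cases hδ0 : δ' = 0
    · refine ⟨g, hg, hg1, ?_⟩
      have hz : ∫⁻ y, (g y - m1 y) ∂σ = 0 := by
        rw [lintegral_sub hm1meas (by rw [hm1int]; exact h1δ'T) (ae_of_all _ hm1g),
          hg1, hm1int, hδ0, tsub_zero, tsub_self]
      have := (lintegral_eq_zero_iff (hg.sub hm1meas)).1 hz
      filter_upwards [this] with y hy
      have hle : g y ≤ m1 y := tsub_eq_zero_iff_le.1 hy
      rw [hδ0, zero_mul, add_zero]
      exact le_antisymm (hm1g y) hle
    · refine ⟨fun y => δ'⁻¹ * (g y - m1 y), (hg.sub hm1meas).const_mul _, ?_, ?_⟩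
      · rw [lintegral_const_mul _ (f := fun y => g y - m1 y) (hg.sub hm1meas),
          lintegral_sub hm1meas (by rw [hm1int]; exact h1δ'T) (ae_of_all _ hm1g),
          hg1, hm1int, ENNReal.sub_sub_cancel ENNReal.one_ne_top hδ1.le,
          ENNReal.inv_mul_cancel hδ0 hδ'T]
      · refine ae_of_all _ fun y => ?_
        rw [← mul_assoc, ENNReal.mul_inv_cancel hδ0 hδ'T, one_mul,
          add_tsub_cancel_of_le (hm1g y)]
  -- the zero/one densities
  have hk01 : ∃ k0 k1 : Y → ℝ≥0∞, Measurable k0 ∧ Measurable k1 ∧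
      ∫⁻ y, k0 y ∂σ = 1 ∧ ∫⁻ y, k1 y ∂σ = 1 ∧
      (∀ᵐ y ∂σ, p * k0 y + q * k1 y = m0 y) ∧
      (∀ᵐ y ∂σ, q * k0 y + p * k1 y = m1 y) := by
    have hqm1pm0 : ∀ y, q * m1 y ≤ p * m0 y := by
      intro y
      calc q * m1 y ≤ q * (c * m0 y) := mul_le_mul_right (hm1cm0 y) q
        _ = p * m0 y := by rw [hp]; ring
    have hqm0pm1 : ∀ y, q * m0 y ≤ p * m1 y := by
      intro y
      calc q * m0 y ≤ q * (c * m1 y) := mul_le_mul_right (hm0cm1 y) q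
        _ = p * m1 y := by rw [hp]; ring
    by_cases hc1' : c = 1
    · -- p = q case
      have hpq : p = q := by rw [hp, hc1', one_mul]
      have hm01 : ∀ y, m0 y = m1 y := fun y =>
        le_antisymm (by simpa [hc1'] using hm0cm1 y) (by simpa [hc1'] using hm1cm0 y)
      refine ⟨fun y => (1 - δ')⁻¹ * m0 y, fun y => (1 - δ')⁻¹ * m0 y,
        hm0meas.const_mul _, hm0meas.const_mul _, ?_, ?_, ?_, ?_⟩
      · rw [lintegral_const_mul _ hm0meas, hm0int, ENNReal.inv_mul_cancel h1δ'0 h1δ'T]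
      · rw [lintegral_const_mul _ hm0meas, hm0int, ENNReal.inv_mul_cancel h1δ'0 h1δ'T]
      · refine ae_of_all _ fun y => ?_
        rw [← add_mul, hpq1, ← mul_assoc, ENNReal.mul_inv_cancel h1δ'0 h1δ'T, one_mul]
      · refine ae_of_all _ fun y => ?_
        rw [← add_mul, add_comm q p, hpq1, ← mul_assoc,
          ENNReal.mul_inv_cancel h1δ'0 h1δ'T, one_mul, hm01 y]
    · -- p > q case
      have h1c : 1 < c := lt_of_le_of_ne hc1 (Ne.symm hc1')
      have hqltp : q < p := by
        rw [hp]
        calc q = 1 * q := (one_mul q).symm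
          _ < c * q := by
            exact ENNReal.mul_lt_mul_left hq0 hqT h1c
      have hr0 : p * p - q * q ≠ 0 := by
        have hp0 : p ≠ 0 := by
          rw [hp]; exact mul_ne_zero (fun h => by simp [h] at hc1) hq0
        have : q * q < p * p := lt_of_le_of_lt
          ((mul_le_mul_right hqltp.le q).trans_eq (mul_comm q p))
          (ENNReal.mul_lt_mul_right hp0 hpT hqltp)
        exact (tsub_pos_of_lt this).ne'
      have hrT : p * p - q * q ≠ ⊤ :=
        ne_top_of_le_ne_top (ENNReal.mul_ne_top hpT hpT) tsub_le_self
      have hr_eq : p * p - q * q = (p - q) * (p + q) := by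
        have hpqT : p * q ≠ ⊤ := ENNReal.mul_ne_top hpT hqT
        calc p * p - q * q
            = (p * p + p * q) - (p * q + q * q) := by
              rw [tsub_add_eq_tsub_tsub, ENNReal.add_sub_cancel_right hpqT]
          _ = (p * p + p * q) - (q * p + q * q) := by rw [mul_comm q p]
          _ = p * (p + q) - q * (p + q) := by rw [mul_add, mul_add]
          _ = (p - q) * (p + q) := (ENNReal.sub_mul fun _ _ =>
              ne_top_of_le_ne_top ENNReal.one_ne_top (hpqδ ▸ le_add_right le_rfl)).symm
      set r := p * p - q * q with hr_def
      refine ⟨fun y => r⁻¹ * (p * m0 y - q * m1 y), fun y => r⁻¹ * (p * m1 y - q * m0 y),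
        ((hm0meas.const_mul p).sub (hm1meas.const_mul q)).const_mul _,
        ((hm1meas.const_mul p).sub (hm0meas.const_mul q)).const_mul _, ?_, ?_, ?_, ?_⟩
      · rw [lintegral_const_mul _ (f := fun y => p * m0 y - q * m1 y) ((hm0meas.const_mul p).sub (hm1meas.const_mul q)),
          lintegral_sub (hm1meas.const_mul q)
            (by rw [lintegral_const_mul _ hm1meas, hm1int];
                exact ENNReal.mul_ne_top hqT h1δ'T)
            (ae_of_all _ hqm1pm0),
          lintegral_const_mul _ hm0meas, lintegral_const_mul _ hm1meas, hm0int, hm1int,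
          ← ENNReal.sub_mul (fun _ _ => h1δ'T), ← hpq1, ← hr_eq]
        exact ENNReal.inv_mul_cancel hr0 hrT
      · rw [lintegral_const_mul _ (f := fun y => p * m1 y - q * m0 y) ((hm1meas.const_mul p).sub (hm0meas.const_mul q)),
          lintegral_sub (hm0meas.const_mul q)
            (by rw [lintegral_const_mul _ hm0meas, hm0int];
                exact ENNReal.mul_ne_top hqT h1δ'T)
            (ae_of_all _ hqm0pm1),
          lintegral_const_mul _ hm1meas, lintegral_const_mul _ hm0meas, hm1int, hm0int,
          ← ENNReal.sub_mul (fun _ _ => h1δ'T), ← hpq1, ← hr_eq]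
        exact ENNReal.inv_mul_cancel hr0 hrT
      · filter_upwards [hm0fin, hm1fin] with y h0 h1
        exact ennreal_solve hpT hqT h0 hr0 (hqm1pm0 y) (hqm0pm1 y)
      · filter_upwards [hm0fin, hm1fin] with y h0 h1
        rw [add_comm]
        exact ennreal_solve hpT hqT h1 hr0 (hqm0pm1 y) (hqm1pm0 y)
  obtain ⟨kb, hkbm, hkbi, hkbae⟩ := hbot
  obtain ⟨kt, hktm, hkti, hktae⟩ := htop
  obtain ⟨k0, k1, hk0m, hk1m, hk0i, hk1i, hae0, hae1⟩ := hk01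
  refine ⟨k0, k1, kt, kb, hk0m, hk1m, hktm, hkbm, hk0i, hk1i, hkti, hkbi, ?_, ?_⟩
  · filter_upwards [hae0, hkbae] with y h1 h2
    rw [h1, h2]
  · filter_upwards [hae1, hktae] with y h1 h2
    rw [h1, h2]

instance : Countable RROut := by
  refine ⟨⟨fun r => match r with | .zero => 0 | .one => 1 | .top => 2 | .bot => 3, ?_⟩⟩
  intro a b h
  cases a <;> cases b <;> simp_all

instance : MeasurableSingletonClass RROut := ⟨fun _ => trivial⟩

/-- Reduction to randomized response (nonadaptive case, Kairouz–Oh–Viswanath): if `μ, ν`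
are probability measures on a standard Borel space `Y` satisfying `(ε, δ)`-DP in both
directions, then there is a Markov kernel `κ` from the four-point output space of
randomized response to `Y` such that `μ` and `ν` are the pushforwards of the laws of
`R(0)` and `R(1)` under `κ`. -/
theorem reduction_to_randomized_response {Y : Type*} [MeasurableSpace Y]
    [StandardBorelSpace Y] [Nonempty Y]
    (μ ν : Measure Y) [IsProbabilityMeasure μ] [IsProbabilityMeasure ν]
    (ε δ : ℝ) (hε : 0 ≤ ε) (hδ0 : 0 ≤ δ) (hδ1 : δ < 1)
    (hdp₁ : ∀ G : Set Y, MeasurableSet G →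
      μ G ≤ ENNReal.ofReal (Real.exp ε) * ν G + ENNReal.ofReal δ)
    (hdp₂ : ∀ G : Set Y, MeasurableSet G →
      ν G ≤ ENNReal.ofReal (Real.exp ε) * μ G + ENNReal.ofReal δ) :
    ∃ κ : ProbabilityTheory.Kernel RROut Y, ProbabilityTheory.IsMarkovKernel κ ∧
      μ = (rrLaw ε δ false).bind κ ∧ ν = (rrLaw ε δ true).bind κ := by
  classical
  -- constants
  set c : ℝ≥0∞ := ENNReal.ofReal (Real.exp ε) with hc_def
  set δ' : ℝ≥0∞ := ENNReal.ofReal δ with hδ'_def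
  set p : ℝ≥0∞ := ENNReal.ofReal ((1 - δ) * Real.exp ε / (1 + Real.exp ε)) with hp_def
  set q : ℝ≥0∞ := ENNReal.ofReal ((1 - δ) / (1 + Real.exp ε)) with hq_def
  have he0 : (0:ℝ) < Real.exp ε := Real.exp_pos ε
  have he1 : (1:ℝ) ≤ Real.exp ε := Real.one_le_exp hε
  have h1e : (0:ℝ) < 1 + Real.exp ε := by linarith
  have hc1 : 1 ≤ c := ENNReal.one_le_ofReal.mpr he1
  have hcT : c ≠ ⊤ := ENNReal.ofReal_ne_top
  have hδ'1 : δ' < 1 := by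
    rw [hδ'_def]; exact ENNReal.ofReal_lt_one.mpr hδ1
  have hp : p = c * q := by
    rw [hp_def, hc_def, hq_def, ← ENNReal.ofReal_mul he0.le]
    congr 1
    field_simp
  have hq0 : q ≠ 0 := by
    rw [hq_def]
    exact (ENNReal.ofReal_pos.mpr (div_pos (by linarith) h1e)).ne'
  have hqT : q ≠ ⊤ := ENNReal.ofReal_ne_top
  have hpqδ : p + q + δ' = 1 := by
    have h1δ : (0:ℝ) ≤ 1 - δ := by linarith
    rw [hp_def, hq_def, hδ'_def,
      ← ENNReal.ofReal_add (div_nonneg (mul_nonneg h1δ he0.le) h1e.le) (div_nonneg h1δ h1e.le),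
      ← ENNReal.ofReal_add (by positivity) hδ0, ← ENNReal.ofReal_one]
    congr 1
    field_simp
    ring
  -- densities
  set σ : Measure Y := μ + ν with hσ_def
  have hμac : μ ≪ σ := Measure.absolutelyContinuous_of_le (Measure.le_add_right le_rfl)
  have hνac : ν ≪ σ := Measure.absolutelyContinuous_of_le (Measure.le_add_left le_rfl)
  set f := μ.rnDeriv σ with hf_def
  set g := ν.rnDeriv σ with hg_def
  have hf : Measurable f := Measure.measurable_rnDeriv μ σ
  have hg : Measurable g := Measure.measurable_rnDeriv ν σ
  have hfd : σ.withDensity f = μ := Measure.withDensity_rnDeriv_eq μ σ hμac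
  have hgd : σ.withDensity g = ν := Measure.withDensity_rnDeriv_eq ν σ hνac
  have hffin : ∀ᵐ y ∂σ, f y ≠ ⊤ := (Measure.rnDeriv_lt_top μ σ).mono fun y h => h.ne
  have hgfin : ∀ᵐ y ∂σ, g y ≠ ⊤ := (Measure.rnDeriv_lt_top ν σ).mono fun y h => h.ne
  have hf1 : ∫⁻ y, f y ∂σ = 1 := by
    rw [← setLIntegral_univ, ← withDensity_apply f MeasurableSet.univ, hfd]
    exact measure_univ
  have hg1 : ∫⁻ y, g y ∂σ = 1 := by
    rw [← setLIntegral_univ, ← withDensity_apply g MeasurableSet.univ, hgd]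
    exact measure_univ
  -- DP bounds on integrals
  have key : ∀ (f' g' : Y → ℝ≥0∞) (μ' ν' : Measure Y), Measurable f' → Measurable g' →
      σ.withDensity f' = μ' → σ.withDensity g' = ν' → (∀ s, ν' s ≠ ⊤) →
      (∀ G : Set Y, MeasurableSet G → μ' G ≤ c * ν' G + δ') →
      ∫⁻ y, (f' y - c * g' y) ∂σ ≤ δ' := by
    intro f' g' μ' ν' hf' hg' hfd' hgd' hν'fin hdp
    set S := {y | c * g' y < f' y} with hS_def
    have hS : MeasurableSet S := measurableSet_lt (hg'.const_mul c) hf'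
    rw [← lintegral_add_compl _ hS]
    have hcompl : ∫⁻ y in Sᶜ, (f' y - c * g' y) ∂σ = 0 := by
      rw [setLIntegral_congr_fun hS.compl
        (fun y (hy : y ∈ Sᶜ) => tsub_eq_zero_of_le (not_lt.1 hy))]
      exact lintegral_zero
    rw [hcompl, add_zero]
    have hgS : ∫⁻ y in S, c * g' y ∂σ = c * ν' S := by
      rw [lintegral_const_mul _ hg', ← withDensity_apply g' hS, hgd']
    have hfS : ∫⁻ y in S, f' y ∂σ = μ' S := by
      rw [← withDensity_apply f' hS, hfd']
    rw [lintegral_sub (hg'.const_mul c)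
      (by rw [hgS]; exact ENNReal.mul_ne_top hcT (hν'fin S))
      ((ae_restrict_iff' hS).2 (ae_of_all _ fun y hy => (le_of_lt hy)))]
    rw [hfS, hgS]
    exact tsub_le_iff_left.2 (hdp S hS)
  have hA : ∫⁻ y, (f y - c * g y) ∂σ ≤ δ' :=
    key f g μ ν hf hg hfd hgd (fun s => measure_ne_top ν s) hdp₁
  have hB : ∫⁻ y, (g y - c * f y) ∂σ ≤ δ' :=
    key g f ν μ hg hf hgd hfd (fun s => measure_ne_top μ s) hdp₂
  have hexists : ∃ k0 k1 kt kb : Y → ℝ≥0∞,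
      Measurable k0 ∧ Measurable k1 ∧ Measurable kt ∧ Measurable kb ∧
      ∫⁻ y, k0 y ∂σ = 1 ∧ ∫⁻ y, k1 y ∂σ = 1 ∧ ∫⁻ y, kt y ∂σ = 1 ∧ ∫⁻ y, kb y ∂σ = 1 ∧
      (∀ᵐ y ∂σ, p * k0 y + q * k1 y + δ' * kb y = f y) ∧
      (∀ᵐ y ∂σ, q * k0 y + p * k1 y + δ' * kt y = g y) := by
    rcases le_total (∫⁻ y, (g y - c * f y) ∂σ) (∫⁻ y, (f y - c * g y) ∂σ) with hBA | hAB
    · exact exists_densities σ c δ' p q hc1 hcT hδ'1 hp hq0 hqT hpqδ f g hf hg hffin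
        hgfin hf1 hg1 hA hB hBA
    · obtain ⟨k0, k1, kt, kb, h1, h2, h3, h4, h5, h6, h7, h8, h9, h10⟩ :=
        exists_densities σ c δ' p q hc1 hcT hδ'1 hp hq0 hqT hpqδ g f hg hf hgfin
          hffin hg1 hf1 hB hA hAB
      refine ⟨k1, k0, kb, kt, h2, h1, h4, h3, h6, h5, h8, h7, ?_, ?_⟩
      · filter_upwards [h10] with y hy
        rw [← hy]; try ring
      · filter_upwards [h9] with y hy
        rw [← hy]; try ring
  obtain ⟨k0, k1, kt, kb, hk0m, hk1m, hktm, hkbm, hk0i, hk1i, hkti, hkbi, haef, haeg⟩ :=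
    hexists
  set κ : Kernel RROut Y := Kernel.ofFunOfCountable (fun r => match r with
    | RROut.zero => σ.withDensity k0
    | RROut.one => σ.withDensity k1
    | RROut.top => σ.withDensity kt
    | RROut.bot => σ.withDensity kb) with hκ_def
  have hκ0 : κ RROut.zero = σ.withDensity k0 := rfl
  have hκ1 : κ RROut.one = σ.withDensity k1 := rfl
  have hκt : κ RROut.top = σ.withDensity kt := rfl
  have hκb : κ RROut.bot = σ.withDensity kb := rfl
  have hiuniv : ∀ (k : Y → ℝ≥0∞), Measurable k → ∫⁻ y, k y ∂σ = 1 →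
      (σ.withDensity k) Set.univ = 1 := by
    intro k hk hk1
    rw [withDensity_apply _ MeasurableSet.univ, setLIntegral_univ, hk1]
  have hmarkov : IsMarkovKernel κ := by
    constructor
    intro r
    constructor
    cases r
    · rw [hκ0]; exact hiuniv k0 hk0m hk0i
    · rw [hκ1]; exact hiuniv k1 hk1m hk1i
    · rw [hκt]; exact hiuniv kt hktm hkti
    · rw [hκb]; exact hiuniv kb hkbm hkbi
  have hbind : ∀ (b : Bool) (ka kbb kc : Y → ℝ≥0∞), Measurable ka → Measurable kbb →
      Measurable kc →
      κ (if b then RROut.one else RROut.zero) = σ.withDensity ka →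
      κ (if b then RROut.zero else RROut.one) = σ.withDensity kbb →
      κ (if b then RROut.top else RROut.bot) = σ.withDensity kc →
      (∀ᵐ y ∂σ, p * ka y + q * kbb y + δ' * kc y = (if b then g else f) y) →
      (if b then ν else μ) = (rrLaw ε δ b).bind κ := by
    intro b ka kbb kc hkam hkbbm hkcm hκa hκbb hκc hae
    ext s hs
    rw [Measure.bind_apply hs (Kernel.measurable κ).aemeasurable]
    rw [rrLaw, lintegral_add_measure, lintegral_add_measure, lintegral_smul_measure,
      lintegral_smul_measure, lintegral_smul_measure, lintegral_dirac, lintegral_dirac,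
      lintegral_dirac, hκa, hκbb, hκc, withDensity_apply _ hs, withDensity_apply _ hs,
      withDensity_apply _ hs]
    have heq : ∫⁻ y in s, (p * ka y + q * kbb y + δ' * kc y) ∂σ
        = ((if b then ν else μ)) s := by
      rw [lintegral_congr_ae (ae_restrict_of_ae (hae.mono fun y hy => hy))]
      cases b
      · simp only [Bool.false_eq_true, if_false]
        rw [← withDensity_apply f hs, hfd]
      · simp only [if_true]
        rw [← withDensity_apply g hs, hgd]
    rw [← heq, lintegral_add_left (f := fun y => p * ka y + q * kbb y) ((hkam.const_mul p).add (hkbbm.const_mul q)),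
      lintegral_add_left (hkam.const_mul p), lintegral_const_mul p hkam,
      lintegral_const_mul q hkbbm, lintegral_const_mul δ' hkcm, smul_eq_mul, smul_eq_mul,
      smul_eq_mul]
  refine ⟨κ, hmarkov, ?_, ?_⟩
  · exact hbind false k0 k1 kb hk0m hk1m hkbm hκ0 hκ1 hκb haef
  · refine hbind true k1 k0 kt hk1m hk0m hktm hκ1 hκ0 hκt ?_
    filter_upwards [haeg] with y hy
    show p * k1 y + q * k0 y + δ' * kt y = g y
    rw [← hy]; try ring
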